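/- Let f ∈ k[x,y,z] be homogeneous of degree d, char k = 0, δ = det(Hessian f). Then (d-1)·(H_yz(Δ_yz) − H_xy(Δ_xy)) = y·∂_y δ − (d-2)·δ, where Δ_yz = f_xy f_xz − f_xx f_yz, Δ_xy = f_xz f_yz − f_xy f_zz, H_yz(g) = f_z∂_y g − f_y∂_z g, H_xy(g) = f_y∂_x g − f_x∂_y g. -/

import Mathlib

open MvPolynomial

noncomputable def dX {k : Type*} [CommSemiring k] (f : MvPolynomial (Fin 3) k) :
    MvPolynomial (Fin 3) k := pderiv 0 f
noncomputable def dY {k : Type*} [CommSemiring k] (f : MvPolynomial (Fin 3) k) :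
    MvPolynomial (Fin 3) k := pderiv 1 f
noncomputable def dZ {k : Type*} [CommSemiring k] (f : MvPolynomial (Fin 3) k) :
    MvPolynomial (Fin 3) k := pderiv 2 f

section Aux

variable {k : Type*} [CommRing k]

lemma pderiv_comm' {σ : Type*} [DecidableEq σ] (i j : σ) (f : MvPolynomial σ k) :
    pderiv i (pderiv j f) = pderiv j (pderiv i f) := by
  induction f using MvPolynomial.induction_on' with
  | add p q hp hq => simp only [map_add, hp, hq]
  | monomial s a =>
    rcases eq_or_ne i j with rfl | h
    · rfl
    · simp only [pderiv_monomial, Finsupp.tsub_apply, Finsupp.single_apply,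
        if_neg h, if_neg (Ne.symm h), Nat.sub_zero]
      rw [tsub_right_comm]
      ring_nf

lemma X_mul_pderiv_monomial {σ : Type*} [DecidableEq σ] (i : σ) (s : σ →₀ ℕ) (a : k) :
    X i * pderiv i (monomial s a) = monomial s (a * (s i : k)) := by
  rw [pderiv_monomial, X, monomial_mul]
  rcases Nat.eq_zero_or_pos (s i) with h | h
  · simp [h]
  · rw [one_mul, add_tsub_cancel_of_le]
    exact Finsupp.single_le_iff.mpr h

lemma euler3 (d : ℕ) (f : MvPolynomial (Fin 3) k) (hf : f.IsHomogeneous d) :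
    X 0 * pderiv 0 f + X 1 * pderiv 1 f + X 2 * pderiv 2 f = C (d : k) * f := by
  conv_lhs => rw [← support_sum_monomial_coeff f]
  conv_rhs => rw [← support_sum_monomial_coeff f]
  rw [map_sum (pderiv 0), map_sum (pderiv 1), map_sum (pderiv 2), Finset.mul_sum,
    Finset.mul_sum, Finset.mul_sum, Finset.mul_sum, ← Finset.sum_add_distrib,
    ← Finset.sum_add_distrib]
  refine Finset.sum_congr rfl fun m hm => ?_
  have hdeg : (m 0 : ℕ) + m 1 + m 2 = d := by
    have h1 : Finsupp.degree m = d := by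
      by_contra h
      exact (mem_support_iff.mp hm) (hf.coeff_eq_zero h)
    rw [← h1, Finsupp.degree, ← Fin.sum_univ_three (fun i => m i)]
    exact (Finset.sum_subset (Finset.subset_univ _)
      (fun i _ hi => Finsupp.notMem_support_iff.mp hi)).symm
  rw [_root_.X_mul_pderiv_monomial, _root_.X_mul_pderiv_monomial, _root_.X_mul_pderiv_monomial,
    C_mul_monomial, ← map_add (monomial m), ← map_add (monomial m)]
  congr 1
  have : ((m 0 : ℕ) + m 1 + m 2 : k) = (d : k) := by exact_mod_cast congrArg _ hdeg
  push_cast at this ⊢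
  linear_combination (coeff m f) * this

lemma euler_step (g : MvPolynomial (Fin 3) k) (c : k)
    (E : X 0 * pderiv 0 g + X 1 * pderiv 1 g + X 2 * pderiv 2 g = C c * g) (j : Fin 3) :
    X 0 * pderiv 0 (pderiv j g) + X 1 * pderiv 1 (pderiv j g) + X 2 * pderiv 2 (pderiv j g)
      = (C c - 1) * pderiv j g := by
  have hXj : pderiv j (X 0 : MvPolynomial (Fin 3) k) * pderiv 0 g
      + pderiv j (X 1 : MvPolynomial (Fin 3) k) * pderiv 1 g
      + pderiv j (X 2 : MvPolynomial (Fin 3) k) * pderiv 2 g = pderiv j g := by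
    fin_cases j <;> simp [pderiv_X, Fin.ext_iff]
  have H := congrArg (pderiv j) E
  simp only [map_add, pderiv_mul, pderiv_C, zero_mul, zero_add,
    pderiv_comm' j 0 g, pderiv_comm' j 1 g, pderiv_comm' j 2 g] at H
  linear_combination H - hXj

lemma c01 (g : MvPolynomial (Fin 3) k) : pderiv 1 (pderiv 0 g) = pderiv 0 (pderiv 1 g) :=
  pderiv_comm' 1 0 g
lemma c02 (g : MvPolynomial (Fin 3) k) : pderiv 2 (pderiv 0 g) = pderiv 0 (pderiv 2 g) :=
  pderiv_comm' 2 0 g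
lemma c12 (g : MvPolynomial (Fin 3) k) : pderiv 2 (pderiv 1 g) = pderiv 1 (pderiv 2 g) :=
  pderiv_comm' 2 1 g


end Aux

theorem stmt17 {k : Type*} [Field k] [CharZero k] (d : ℕ)
    (f : MvPolynomial (Fin 3) k) (hf : f.IsHomogeneous d) :
    C ((d : k) - 1) *
        ((dZ f * dY (dY (dX f) * dZ (dX f) - dX (dX f) * dZ (dY f))
            - dY f * dZ (dY (dX f) * dZ (dX f) - dX (dX f) * dZ (dY f)))
          - (dY f * dX (dZ (dX f) * dZ (dY f) - dY (dX f) * dZ (dZ f))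
            - dX f * dY (dZ (dX f) * dZ (dY f) - dY (dX f) * dZ (dZ f))))
      = X 1 * pderiv 1
            (Matrix.det (Matrix.of fun i j : Fin 3 => pderiv i (pderiv j f)))
        - C ((d : k) - 2) *
            Matrix.det (Matrix.of fun i j : Fin 3 => pderiv i (pderiv j f)) := by
  have E := euler3 d f hf
  have E0 := euler_step _ _ E 0
  have E1 := euler_step _ _ E 1
  have E2 := euler_step _ _ E 2
  have hC : (C ((d : k) - 1) : MvPolynomial (Fin 3) k) = C (d : k) - 1 := by
    rw [map_sub, map_one]
  have E10 := euler_step _ ((d : k) - 1) (by rw [hC]; exact E1) 0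
  have E11 := euler_step _ ((d : k) - 1) (by rw [hC]; exact E1) 1
  have E21 := euler_step _ ((d : k) - 1) (by rw [hC]; exact E2) 1
  rw [hC] at E10 E11 E21
  simp only [c01, c02, c12] at E0 E1 E2 E10 E11 E21
  rw [show C ((d : k) - 1) = C (d : k) - 1 by rw [map_sub, map_one],
    show C ((d : k) - 2) = C (d : k) - 2 by rw [map_sub, map_ofNat]]
  simp only [dX, dY, dZ, Matrix.det_fin_three, Matrix.of_apply, map_sub, map_add, pderiv_mul,
    c01, c02, c12]
  set x := X (R := k) (0 : Fin 3)
  set a := pderiv (0 : Fin 3) (pderiv (0 : Fin 3) f) with ha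
  set b := pderiv (0 : Fin 3) (pderiv (1 : Fin 3) f) with hb
  set c := pderiv (0 : Fin 3) (pderiv (2 : Fin 3) f) with hc
  set e := pderiv (1 : Fin 3) (pderiv (1 : Fin 3) f) with he
  set g := pderiv (1 : Fin 3) (pderiv (2 : Fin 3) f) with hg
  set h := pderiv (2 : Fin 3) (pderiv (2 : Fin 3) f) with hh
  set Txxy := pderiv (0 : Fin 3) (pderiv (0 : Fin 3) (pderiv (1 : Fin 3) f)) with h1
  set Txxz := pderiv (0 : Fin 3) (pderiv (0 : Fin 3) (pderiv (2 : Fin 3) f)) with h2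
  set Txyy := pderiv (0 : Fin 3) (pderiv (1 : Fin 3) (pderiv (1 : Fin 3) f)) with h3
  set Txyz := pderiv (0 : Fin 3) (pderiv (1 : Fin 3) (pderiv (2 : Fin 3) f)) with h4
  set Txzz := pderiv (0 : Fin 3) (pderiv (2 : Fin 3) (pderiv (2 : Fin 3) f)) with h5
  set Tyyz := pderiv (1 : Fin 3) (pderiv (1 : Fin 3) (pderiv (2 : Fin 3) f)) with h6
  set Tyzz := pderiv (1 : Fin 3) (pderiv (2 : Fin 3) (pderiv (2 : Fin 3) f)) with h7
  linear_combination
    (-(Txyy * c + b * Txyz - Txxy * g - a * Tyyz)) * E2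
    + ((Txyz * c + b * Txzz - Txxz * g - a * Tyzz)
        + (Txxz * g + c * Txyz - Txxy * h - b * Txzz)) * E1
    + (-(Txyz * g + c * Tyyz - Txyy * h - b * Tyzz)) * E0
    + (b * h - c * g) * E10 + (c * c - a * h) * E11 + (a * g - b * c) * E21
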